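/- (Derivative of the pseudo-inverse of a smooth one-parameter matrix family.) Let Q : ℝ → Matrix (Fin n) (Fin n) ℝ, R : ℝ → Matrix (Fin n) (Fin n) ℝ and x₀ : ℝ → (Fin n → ℝ) be differentiable, and suppose for every t: (Q t)ᵀ = Q t, (R t)ᵀ = R t, (Q t).mulVec (x₀ t) = 0, (R t).mulVec (x₀ t) = 0, (R t) * (Q t) = 1 - Matrix.vecMulVec (x₀ t) (x₀ t), (Q t) * (R t) = 1 - Matrix.vecMulVec (x₀ t) (x₀ t), and x₀ t ⬝ᵥ x₀ t = 1. Then for every t, writing Q̇ := deriv Q t, x := x₀ t, R' := R t: deriv R t = -(R' * Q̇ * R') + Matrix.vecMulVec x ((R' * R').mulVec (Q̇.mulVec x)) + Matrix.vecMulVec ((R' * R').mulVec (Q̇.mulVec x)) x. -/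

import Mathlib

open Matrix

attribute [local instance] Matrix.normedAddCommGroup Matrix.normedSpace

section aux
variable {n : ℕ} {t : ℝ}

lemma hasDerivAt_vecEntry {v : ℝ → Fin n → ℝ} {v' : Fin n → ℝ}
    (h : HasDerivAt v v' t) (i : Fin n) : HasDerivAt (fun s => v s i) (v' i) t :=
  hasDerivAt_pi.1 h i

lemma hasDerivAt_entry {A : ℝ → Matrix (Fin n) (Fin n) ℝ} {A' : Matrix (Fin n) (Fin n) ℝ}
    (h : HasDerivAt A A' t) (i j : Fin n) : HasDerivAt (fun s => A s i j) (A' i j) t :=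
  hasDerivAt_pi.1 (hasDerivAt_pi.1 h i) j

lemma hasDerivAt_matrix {A : ℝ → Matrix (Fin n) (Fin n) ℝ} {A' : Matrix (Fin n) (Fin n) ℝ}
    (h : ∀ i j, HasDerivAt (fun s => A s i j) (A' i j) t) : HasDerivAt A A' t :=
  hasDerivAt_pi.2 fun i => hasDerivAt_pi.2 fun j => h i j

lemma hasDerivAt_vec {v : ℝ → Fin n → ℝ} {v' : Fin n → ℝ}
    (h : ∀ i, HasDerivAt (fun s => v s i) (v' i) t) : HasDerivAt v v' t :=
  hasDerivAt_pi.2 h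

lemma hasDerivAt_matMul {A B : ℝ → Matrix (Fin n) (Fin n) ℝ}
    {A' B' : Matrix (Fin n) (Fin n) ℝ} (hA : HasDerivAt A A' t) (hB : HasDerivAt B B' t) :
    HasDerivAt (fun s => A s * B s) (A' * B t + A t * B') t := by
  apply hasDerivAt_matrix
  intro i j
  have h : HasDerivAt (fun s => ∑ k, A s i k * B s k j)
      (∑ k, (A' i k * B t k j + A t i k * B' k j)) t :=
    HasDerivAt.fun_sum fun k _ => (hasDerivAt_entry hA i k).fun_mul (hasDerivAt_entry hB k j)
  simpa [Matrix.mul_apply, Finset.sum_add_distrib] using h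

lemma hasDerivAt_mulVec {A : ℝ → Matrix (Fin n) (Fin n) ℝ} {A' : Matrix (Fin n) (Fin n) ℝ}
    {v : ℝ → Fin n → ℝ} {v' : Fin n → ℝ} (hA : HasDerivAt A A' t) (hv : HasDerivAt v v' t) :
    HasDerivAt (fun s => (A s).mulVec (v s)) (A'.mulVec (v t) + (A t).mulVec v') t := by
  apply hasDerivAt_vec
  intro i
  have h : HasDerivAt (fun s => ∑ k, A s i k * v s k)
      (∑ k, (A' i k * v t k + A t i k * v' k)) t :=
    HasDerivAt.fun_sum fun k _ => (hasDerivAt_entry hA i k).fun_mul (hasDerivAt_vecEntry hv k)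
  simpa [Matrix.mulVec, dotProduct, Finset.sum_add_distrib] using h

lemma hasDerivAt_vecMulVec {u v : ℝ → Fin n → ℝ} {u' v' : Fin n → ℝ}
    (hu : HasDerivAt u u' t) (hv : HasDerivAt v v' t) :
    HasDerivAt (fun s => vecMulVec (u s) (v s)) (vecMulVec u' (v t) + vecMulVec (u t) v') t := by
  apply hasDerivAt_matrix
  intro i j
  simpa [Matrix.vecMulVec_apply] using (hasDerivAt_vecEntry hu i).fun_mul (hasDerivAt_vecEntry hv j)

lemma vecMulVec_mul {a b : Fin n → ℝ} (M : Matrix (Fin n) (Fin n) ℝ) :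
    vecMulVec a b * M = vecMulVec a (Mᵀ.mulVec b) := by
  ext i j
  simp [Matrix.mul_apply, Matrix.vecMulVec_apply, Matrix.mulVec, dotProduct,
    Finset.mul_sum, mul_comm, mul_assoc, mul_left_comm]

lemma mul_vecMulVec {a b : Fin n → ℝ} (M : Matrix (Fin n) (Fin n) ℝ) :
    M * vecMulVec a b = vecMulVec (M.mulVec a) b := by
  ext i j
  simp [Matrix.mul_apply, Matrix.vecMulVec_apply, Matrix.mulVec, dotProduct,
    Finset.sum_mul, mul_assoc]

lemma vecMulVec_mulVec {a b v : Fin n → ℝ} :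
    (vecMulVec a b).mulVec v = (b ⬝ᵥ v) • a := by
  ext i
  simp [Matrix.mulVec, Matrix.vecMulVec_apply, dotProduct, Finset.mul_sum, mul_assoc,
    mul_comm, mul_left_comm]

lemma vecMulVec_zero' {a : Fin n → ℝ} : vecMulVec a (0 : Fin n → ℝ) = 0 := by
  ext i j; simp [Matrix.vecMulVec_apply]

lemma vecMulVec_neg' {a b : Fin n → ℝ} : vecMulVec a (-b) = -vecMulVec a b := by
  ext i j; simp [Matrix.vecMulVec_apply]

end aux

theorem deriv_pseudo_inverse (n : ℕ)
    (Q R : ℝ → Matrix (Fin n) (Fin n) ℝ) (x₀ : ℝ → (Fin n → ℝ))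
    (hQ : Differentiable ℝ Q) (hR : Differentiable ℝ R) (hx : Differentiable ℝ x₀)
    (hQsymm : ∀ t, (Q t)ᵀ = Q t) (hRsymm : ∀ t, (R t)ᵀ = R t)
    (hker : ∀ t, (Q t).mulVec (x₀ t) = 0)
    (hkerR : ∀ t, (R t).mulVec (x₀ t) = 0)
    (hRQ : ∀ t, R t * Q t = 1 - Matrix.vecMulVec (x₀ t) (x₀ t))
    (hQR : ∀ t, Q t * R t = 1 - Matrix.vecMulVec (x₀ t) (x₀ t))
    (hnorm : ∀ t, x₀ t ⬝ᵥ x₀ t = 1) :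
    ∀ t : ℝ,
      deriv R t =
        -(R t * deriv Q t * R t) +
          Matrix.vecMulVec (x₀ t) ((R t * R t).mulVec ((deriv Q t).mulVec (x₀ t))) +
          Matrix.vecMulVec ((R t * R t).mulVec ((deriv Q t).mulVec (x₀ t))) (x₀ t) := by
  intro t
  set Qm := Q t with hQm
  set Rm := R t with hRm
  set x := x₀ t with hxm
  set Q' := deriv Q t with hQ'
  set R' := deriv R t with hR'
  set x' := deriv x₀ t with hx'
  have hQd : HasDerivAt Q Q' t := (hQ t).hasDerivAt
  have hRd : HasDerivAt R R' t := (hR t).hasDerivAt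
  have hxd : HasDerivAt x₀ x' t := (hx t).hasDerivAt
  -- differentiate R * Q = 1 - P
  have d1 : HasDerivAt (fun s => R s * Q s) (R' * Qm + Rm * Q') t := hasDerivAt_matMul hRd hQd
  have d2 : HasDerivAt (fun s => R s * Q s)
      ((0 : Matrix (Fin n) (Fin n) ℝ) - (vecMulVec x' x + vecMulVec x x')) t := by
    have : HasDerivAt (fun s => (1 : Matrix (Fin n) (Fin n) ℝ) - vecMulVec (x₀ s) (x₀ s))
        ((0 : Matrix (Fin n) (Fin n) ℝ) - (vecMulVec x' x + vecMulVec x x')) t :=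
      (hasDerivAt_const t _).sub (hasDerivAt_vecMulVec hxd hxd)
    simpa [funext hRQ] using this
  have eqA : R' * Qm + Rm * Q' = -(vecMulVec x' x + vecMulVec x x') := by
    have := d1.unique d2; simpa [zero_sub] using this
  -- differentiate Q *ᵥ x₀ = 0
  have d3 : HasDerivAt (fun s => (Q s).mulVec (x₀ s)) (Q'.mulVec x + Qm.mulVec x') t :=
    hasDerivAt_mulVec hQd hxd
  have d4 : HasDerivAt (fun s => (Q s).mulVec (x₀ s)) 0 t := by
    have : HasDerivAt (fun _ : ℝ => (0 : Fin n → ℝ)) 0 t := hasDerivAt_const t _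
    simpa [funext hker] using this
  have eqC : Qm.mulVec x' = -(Q'.mulVec x) :=
    eq_neg_of_add_eq_zero_right (d3.unique d4)
  -- differentiate R *ᵥ x₀ = 0
  have d5 : HasDerivAt (fun s => (R s).mulVec (x₀ s)) (R'.mulVec x + Rm.mulVec x') t :=
    hasDerivAt_mulVec hRd hxd
  have d6 : HasDerivAt (fun s => (R s).mulVec (x₀ s)) 0 t := by
    have : HasDerivAt (fun _ : ℝ => (0 : Fin n → ℝ)) 0 t := hasDerivAt_const t _
    simpa [funext hkerR] using this
  have eqD : R'.mulVec x = -(Rm.mulVec x') :=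
    eq_neg_of_add_eq_zero_left (d5.unique d6)
  -- key : Rm *ᵥ x' = -((Rm*Rm) *ᵥ (Q' *ᵥ x))
  have hx'eq : x' = (x ⬝ᵥ x') • x - Rm.mulVec (Q'.mulVec x) := by
    have h5 : (Rm * Qm).mulVec x' = -(Rm.mulVec (Q'.mulVec x)) := by
      rw [← Matrix.mulVec_mulVec, eqC, Matrix.mulVec_neg]
    have h6 : (Rm * Qm).mulVec x' = x' - (x ⬝ᵥ x') • x := by
      rw [hRm, hQm, hRQ t, Matrix.sub_mulVec, Matrix.one_mulVec, vecMulVec_mulVec]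
    rw [h6] at h5
    linear_combination (norm := module) h5
  have key : Rm.mulVec x' = -((Rm * Rm).mulVec (Q'.mulVec x)) := by
    rw [hx'eq, Matrix.mulVec_sub, Matrix.mulVec_smul, Matrix.mulVec_mulVec]
    rw [show Rm.mulVec x = 0 from hkerR t]
    simp
  -- pieces for the final computation
  have hRx : Rm.mulVec x = 0 := hkerR t
  have hR'x : R'.mulVec x = (Rm * Rm).mulVec (Q'.mulVec x) := by
    rw [eqD, key, neg_neg]
  have hone : Qm * Rm + vecMulVec x x = 1 := by
    rw [hQm, hRm, hxm, hQR t]; abel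
  have hR'Q : R' * Qm = -(vecMulVec x' x + vecMulVec x x') - Rm * Q' :=
    eq_sub_of_add_eq eqA
  have hv1 : vecMulVec x' x * Rm = 0 := by
    rw [vecMulVec_mul, hRsymm t, hRx, vecMulVec_zero']
  have hv2 : vecMulVec x x' * Rm = -(vecMulVec x ((Rm * Rm).mulVec (Q'.mulVec x))) := by
    rw [vecMulVec_mul, hRsymm t, key, vecMulVec_neg']
  calc R' = R' * (Qm * Rm + vecMulVec x x) := by rw [hone, mul_one]
    _ = R' * Qm * Rm + vecMulVec (R'.mulVec x) x := by
        rw [mul_add, mul_vecMulVec, mul_assoc]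
    _ = (-(vecMulVec x' x + vecMulVec x x') - Rm * Q') * Rm
          + vecMulVec ((Rm * Rm).mulVec (Q'.mulVec x)) x := by rw [hR'Q, hR'x]
    _ = -(vecMulVec x' x * Rm) - vecMulVec x x' * Rm - Rm * Q' * Rm
          + vecMulVec ((Rm * Rm).mulVec (Q'.mulVec x)) x := by noncomm_ring
    _ = -(Rm * Q' * Rm) + vecMulVec x ((Rm * Rm).mulVec (Q'.mulVec x))
          + vecMulVec ((Rm * Rm).mulVec (Q'.mulVec x)) x := by rw [hv1, hv2]; abel
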